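/- Let K be a variety of square-increasing IRLs. Then K has no nontrivial idempotent member if and only if K satisfies the identity x ≤ f², where f := ¬e. -/

import Mathlib

universe u

/-- A bundled square-increasing involutive commutative residuated lattice. -/
structure SqIRL : Type (u + 1) where
  carrier : Type u
  [lat : Lattice carrier]
  [mon : CommMonoid carrier]
  neg : carrier → carrier
  neg_neg : ∀ x : carrier, neg (neg x) = x
  res : ∀ x y z : carrier, x * y ≤ z ↔ neg z * y ≤ neg x
  sq : ∀ x : carrier, x ≤ x * x

attribute [instance] SqIRL.lat SqIRL.mon

/-- A homomorphism of square-increasing IRLs. -/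
structure SqIRLHom (A B : SqIRL.{u}) where
  toFun : A.carrier → B.carrier
  map_mul : ∀ x y : A.carrier, toFun (x * y) = toFun x * toFun y
  map_one : toFun 1 = 1
  map_inf : ∀ x y : A.carrier, toFun (x ⊓ y) = toFun x ⊓ toFun y
  map_sup : ∀ x y : A.carrier, toFun (x ⊔ y) = toFun x ⊔ toFun y
  map_neg : ∀ x : A.carrier, toFun (A.neg x) = B.neg (toFun x)

/-- The direct product of a family of square-increasing IRLs. -/
def SqIRL.prod (I : Type u) (f : I → SqIRL.{u}) : SqIRL.{u} where
  carrier := ∀ i, (f i).carrier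
  neg x := fun i => (f i).neg (x i)
  neg_neg x := by funext i; exact (f i).neg_neg (x i)
  res x y z := by
    constructor
    · intro h i; exact ((f i).res (x i) (y i) (z i)).mp (h i)
    · intro h i; exact ((f i).res (x i) (y i) (z i)).mpr (h i)
  sq x := fun i => (f i).sq (x i)

namespace SqIRLAux

variable (A : SqIRL.{u})

theorem neg_anti {x y : A.carrier} (h : x ≤ y) : A.neg y ≤ A.neg x := by
  have h1 : x * 1 ≤ y := by simpa using h
  have h2 := (A.res x 1 y).mp h1
  simpa using h2

theorem le_neg_iff {x y : A.carrier} : x ≤ A.neg y ↔ y ≤ A.neg x := by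
  constructor
  · intro h; have := neg_anti A h; rwa [A.neg_neg] at this
  · intro h; have := neg_anti A h; rwa [A.neg_neg] at this

theorem mul_le_r {x y : A.carrier} (h : x ≤ y) (z : A.carrier) : x * z ≤ y * z := by
  apply (A.res x z (y * z)).mpr
  exact le_trans ((A.res y z (y * z)).mp le_rfl) (neg_anti A h)

theorem mul_le_l {x y : A.carrier} (h : x ≤ y) (z : A.carrier) : z * x ≤ z * y := by
  rw [mul_comm z x, mul_comm z y]; exact mul_le_r A h z

theorem mul_le_mul' {x y z t : A.carrier} (h1 : x ≤ y) (h2 : z ≤ t) : x * z ≤ y * t :=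
  le_trans (mul_le_r A h1 z) (mul_le_l A h2 y)

/-- The residuation adjunction. -/
theorem adj {x y z : A.carrier} : x * y ≤ z ↔ x ≤ A.neg (A.neg z * y) :=
  (A.res x y z).trans (le_neg_iff A).symm

/-- `w = ¬(f²)` where `f = ¬e`. -/
def w : A.carrier := A.neg (A.neg 1 * A.neg 1)

theorem w_le_one : w A ≤ 1 := by
  have h := neg_anti A (A.sq (A.neg 1))
  rwa [A.neg_neg] at h

theorem w_mul_w : w A * w A = w A := by
  refine le_antisymm ?_ (A.sq (w A))
  have := mul_le_r A (w_le_one A) (w A)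
  rwa [one_mul] at this

theorem w_mul_le (x : A.carrier) : w A * x ≤ x := by
  have := mul_le_r A (w_le_one A) x
  rwa [one_mul] at this

theorem mul_neg_self_le (x : A.carrier) : x * A.neg x ≤ A.neg 1 := by
  apply (A.res x (A.neg x) (A.neg 1)).mpr
  rw [A.neg_neg, one_mul]

/-- The key fact forcing idempotency of the quotient: `w·x² ≤ x`. -/
theorem key1 (x : A.carrier) : w A * (x * x) ≤ x := by
  have h1 : x * x * A.neg x ≤ A.neg 1 * A.neg 1 := by
    have h2 : x * x * A.neg x ≤ (x * x) * (A.neg x * A.neg x) :=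
      mul_le_l A (A.sq (A.neg x)) (x * x)
    have h3 : (x * x) * (A.neg x * A.neg x) = (x * A.neg x) * (x * A.neg x) := by
      rw [mul_mul_mul_comm]
    have h4 : (x * A.neg x) * (x * A.neg x) ≤ A.neg 1 * A.neg 1 :=
      mul_le_mul' A (mul_neg_self_le A x) (mul_neg_self_le A x)
    exact le_trans h2 (h3 ▸ h4)
  have h5 := (A.res (x * x) (A.neg x) (A.neg 1 * A.neg 1)).mp h1
  have h6 : A.neg x * w A ≤ A.neg (x * x) := by rw [mul_comm]; exact h5
  have h7 := (A.res (x * x) (w A) x).mpr h6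
  rwa [mul_comm] at h7

/-- The key fact forcing nontriviality of the quotient. -/
theorem key2 {x : A.carrier} (h : w A * x ≤ A.neg 1 * A.neg 1) : x ≤ A.neg 1 * A.neg 1 := by
  have h1 : x * w A ≤ A.neg 1 * A.neg 1 := by rwa [mul_comm]
  have h2 : w A * w A ≤ A.neg x := (A.res x (w A) (A.neg 1 * A.neg 1)).mp h1
  rw [w_mul_w] at h2
  have h3 := (le_neg_iff A).mpr h2
  rwa [w, A.neg_neg] at h3

/-- `w·(x ⊔ y) ≤ z` from the components. -/
theorem sup_le_aux {x y z : A.carrier} (hx : w A * x ≤ z) (hy : w A * y ≤ z) :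
    w A * (x ⊔ y) ≤ z := by
  rw [mul_comm]
  rw [mul_comm] at hx hy
  exact (adj A).mpr (sup_le ((adj A).mp hx) ((adj A).mp hy))

/-- The congruence: `x ~ y` iff `w·x ≤ y` and `w·y ≤ x`. -/
def qsetoid : Setoid A.carrier where
  r x y := w A * x ≤ y ∧ w A * y ≤ x
  iseqv := by
    refine ⟨fun x => ⟨w_mul_le A x, w_mul_le A x⟩, fun h => ⟨h.2, h.1⟩, ?_⟩
    rintro x y z ⟨h1, h2⟩ ⟨h3, h4⟩
    constructor
    · calc w A * x = w A * (w A * x) := by rw [← mul_assoc, w_mul_w]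
        _ ≤ w A * y := mul_le_l A h1 _
        _ ≤ z := h3
    · calc w A * z = w A * (w A * z) := by rw [← mul_assoc, w_mul_w]
        _ ≤ w A * y := mul_le_l A h4 _
        _ ≤ x := h2

theorem mul_compat : ∀ x y : A.carrier, (qsetoid A).r x y →
    ∀ z t : A.carrier, (qsetoid A).r z t → (qsetoid A).r (x * z) (y * t) := by
  rintro x y ⟨h1, h2⟩ z t ⟨h3, h4⟩
  have key : ∀ p q : A.carrier, w A * (p * q) = (w A * p) * (w A * q) := fun p q => by
    rw [mul_mul_mul_comm, w_mul_w]
  constructor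
  · rw [key]; exact mul_le_mul' A h1 h3
  · rw [key]; exact mul_le_mul' A h2 h4

theorem inf_compat : ∀ x y : A.carrier, (qsetoid A).r x y →
    ∀ z t : A.carrier, (qsetoid A).r z t → (qsetoid A).r (x ⊓ z) (y ⊓ t) := by
  rintro x y ⟨h1, h2⟩ z t ⟨h3, h4⟩
  constructor
  · exact le_inf (le_trans (mul_le_l A inf_le_left _) h1)
      (le_trans (mul_le_l A inf_le_right _) h3)
  · exact le_inf (le_trans (mul_le_l A inf_le_left _) h2)
      (le_trans (mul_le_l A inf_le_right _) h4)

theorem sup_compat : ∀ x y : A.carrier, (qsetoid A).r x y →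
    ∀ z t : A.carrier, (qsetoid A).r z t → (qsetoid A).r (x ⊔ z) (y ⊔ t) := by
  rintro x y ⟨h1, h2⟩ z t ⟨h3, h4⟩
  constructor
  · exact sup_le_aux A (le_trans h1 le_sup_left) (le_trans h3 le_sup_right)
  · exact sup_le_aux A (le_trans h2 le_sup_left) (le_trans h4 le_sup_right)

theorem neg_compat : ∀ x y : A.carrier, (qsetoid A).r x y →
    (qsetoid A).r (A.neg x) (A.neg y) := by
  rintro x y ⟨h1, h2⟩
  constructor
  · have : y * w A ≤ x := by rwa [mul_comm] at h2
    have := (A.res y (w A) x).mp this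
    rwa [mul_comm] at this
  · have : x * w A ≤ y := by rwa [mul_comm] at h1
    have := (A.res x (w A) y).mp this
    rwa [mul_comm] at this

instance qMul : Mul (Quotient (qsetoid A)) := ⟨Quotient.map₂ (· * ·) (mul_compat A)⟩
instance qOne : One (Quotient (qsetoid A)) := ⟨⟦1⟧⟩
instance qMax : Max (Quotient (qsetoid A)) := ⟨Quotient.map₂ (· ⊔ ·) (sup_compat A)⟩
instance qMin : Min (Quotient (qsetoid A)) := ⟨Quotient.map₂ (· ⊓ ·) (inf_compat A)⟩

theorem mk_mul (x y : A.carrier) :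
    (⟦x⟧ * ⟦y⟧ : Quotient (qsetoid A)) = ⟦x * y⟧ := rfl
theorem mk_sup (x y : A.carrier) :
    (⟦x⟧ ⊔ ⟦y⟧ : Quotient (qsetoid A)) = ⟦x ⊔ y⟧ := rfl
theorem mk_inf (x y : A.carrier) :
    (⟦x⟧ ⊓ ⟦y⟧ : Quotient (qsetoid A)) = ⟦x ⊓ y⟧ := rfl

instance qMon : CommMonoid (Quotient (qsetoid A)) where
  mul_assoc a b c := Quotient.inductionOn₃ a b c fun x y z => by
    simp only [mk_mul, mul_assoc]
  one_mul a := Quotient.inductionOn a fun x => by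
    show (⟦1⟧ * ⟦x⟧ : Quotient (qsetoid A)) = ⟦x⟧
    simp only [mk_mul, one_mul]
  mul_one a := Quotient.inductionOn a fun x => by
    show (⟦x⟧ * ⟦1⟧ : Quotient (qsetoid A)) = ⟦x⟧
    simp only [mk_mul, mul_one]
  mul_comm a b := Quotient.inductionOn₂ a b fun x y => by
    simp only [mk_mul, mul_comm]

instance qLat : Lattice (Quotient (qsetoid A)) :=
  Lattice.mk'
    (fun a b => Quotient.inductionOn₂ a b fun x y => by simp only [mk_sup, sup_comm])
    (fun a b c => Quotient.inductionOn₃ a b c fun x y z => by simp only [mk_sup, sup_assoc])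
    (fun a b => Quotient.inductionOn₂ a b fun x y => by simp only [mk_inf, inf_comm])
    (fun a b c => Quotient.inductionOn₃ a b c fun x y z => by simp only [mk_inf, inf_assoc])
    (fun a b => Quotient.inductionOn₂ a b fun x y => by
      simp only [mk_inf, mk_sup, sup_inf_self])
    (fun a b => Quotient.inductionOn₂ a b fun x y => by
      simp only [mk_sup, mk_inf, inf_sup_self])

instance qLE : LE (Quotient (qsetoid A)) := (qLat A).toLE

theorem qle_iff {x y : A.carrier} :
    (⟦x⟧ : Quotient (qsetoid A)) ≤ ⟦y⟧ ↔ w A * x ≤ y := by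
  rw [← sup_eq_right, mk_sup, Quotient.eq]
  constructor
  · rintro ⟨h1, -⟩
    exact le_trans (mul_le_l A le_sup_left (w A)) h1
  · intro h
    exact ⟨sup_le_aux A h (w_mul_le A y), le_trans (w_mul_le A y) le_sup_right⟩

/-- The idempotent quotient of a square-increasing IRL. -/
def idemQuot : SqIRL.{u} where
  carrier := Quotient (qsetoid A)
  lat := qLat A
  mon := qMon A
  neg := Quotient.map A.neg (neg_compat A)
  neg_neg q := Quotient.inductionOn q fun x => by
    show (⟦A.neg (A.neg x)⟧ : Quotient (qsetoid A)) = ⟦x⟧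
    rw [A.neg_neg]
  res a b c := Quotient.inductionOn₃ a b c fun x y z => by
    show (⟦x⟧ * ⟦y⟧ : Quotient (qsetoid A)) ≤ ⟦z⟧ ↔
      (⟦A.neg z⟧ * ⟦y⟧ : Quotient (qsetoid A)) ≤ ⟦A.neg x⟧
    rw [mk_mul, mk_mul, qle_iff, qle_iff]
    constructor
    · intro h
      have h1 : x * (w A * y) ≤ z := by rw [← mul_left_comm]; exact h
      have h2 := (A.res x (w A * y) z).mp h1
      rwa [mul_left_comm] at h2
    · intro h
      have h1 : A.neg z * (w A * y) ≤ A.neg x := by rw [← mul_left_comm]; exact h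
      have h2 := (A.res x (w A * y) z).mpr h1
      rwa [mul_left_comm] at h2
  sq a := Quotient.inductionOn a fun x => by
    show (⟦x⟧ : Quotient (qsetoid A)) ≤ ⟦x⟧ * ⟦x⟧
    rw [mk_mul, qle_iff]
    exact le_trans (w_mul_le A x) (A.sq x)

theorem idemQuot_idem (a : (idemQuot A).carrier) : a * a = a :=
  Quotient.inductionOn a fun x => by
    show (⟦x⟧ * ⟦x⟧ : Quotient (qsetoid A)) = ⟦x⟧
    show (⟦x * x⟧ : Quotient (qsetoid A)) = ⟦x⟧
    exact Quotient.sound ⟨key1 A x, le_trans (w_mul_le A x) (A.sq x)⟩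

/-- The quotient map as a homomorphism. -/
def quotHom : SqIRLHom A (idemQuot A) where
  toFun := Quotient.mk (qsetoid A)
  map_mul _ _ := rfl
  map_one := rfl
  map_inf _ _ := rfl
  map_sup _ _ := rfl
  map_neg _ := rfl

theorem quotHom_surj : Function.Surjective (quotHom A).toFun :=
  Quotient.exists_rep

theorem idemQuot_nontrivial {x : A.carrier} (hx : ¬ x ≤ A.neg 1 * A.neg 1) :
    (⟦x⟧ : Quotient (qsetoid A)) ≠ ⟦x ⊓ (A.neg 1 * A.neg 1)⟧ := by
  intro h
  have h1 := Quotient.exact h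
  exact hx (key2 A (le_trans h1.1 inf_le_right))

end SqIRLAux

/-- A variety (class closed under homomorphic images, subalgebras and products) of
square-increasing IRLs has no nontrivial idempotent member iff it satisfies
`x ≤ f²`, where `f := ¬e`. -/
theorem stmt8 (K : SqIRL.{u} → Prop)
    (hH : ∀ A B : SqIRL.{u}, K A →
      (∃ h : SqIRLHom A B, Function.Surjective h.toFun) → K B)
    (hS : ∀ A B : SqIRL.{u}, K A →
      (∃ h : SqIRLHom B A, Function.Injective h.toFun) → K B)
    (hP : ∀ (I : Type u) (f : I → SqIRL.{u}), (∀ i, K (f i)) → K (SqIRL.prod I f)) :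
    (¬ ∃ A : SqIRL.{u}, K A ∧ (∀ x : A.carrier, x * x = x) ∧ ∃ x y : A.carrier, x ≠ y)
      ↔ (∀ A : SqIRL.{u}, K A → ∀ x : A.carrier, x ≤ A.neg 1 * A.neg 1) := by
  constructor
  · intro hno A hA x
    by_contra hx
    exact hno ⟨SqIRLAux.idemQuot A,
      hH A _ hA ⟨SqIRLAux.quotHom A, SqIRLAux.quotHom_surj A⟩,
      SqIRLAux.idemQuot_idem A,
      ⟦x⟧, ⟦x ⊓ (A.neg 1 * A.neg 1)⟧, SqIRLAux.idemQuot_nontrivial A hx⟩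
  · rintro hid ⟨A, hA, hidem, x, y, hxy⟩
    have hle := hid A hA
    have hf : ∀ z : A.carrier, z ≤ A.neg 1 := fun z => (hidem (A.neg 1)) ▸ hle z
    have hone_le : ∀ z : A.carrier, (1 : A.carrier) ≤ z := fun z => by
      have h := (SqIRLAux.le_neg_iff A).mp (hf (A.neg z))
      rwa [A.neg_neg] at h
    have hfle : A.neg 1 ≤ 1 := by
      have h1 : A.neg 1 * A.neg 1 ≤ A.neg 1 := le_of_eq (hidem _)
      have h2 := (A.res (A.neg 1) (A.neg 1) (A.neg 1)).mp h1
      rwa [A.neg_neg, one_mul] at h2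
    have hall : ∀ z : A.carrier, z = 1 := fun z =>
      le_antisymm (le_trans (hf z) hfle) (hone_le z)
    exact hxy ((hall x).trans (hall y).symm)
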